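/- arXiv:2203.15167 — 4 statements merged into one kernel-verified Lean document; each statement's English description precedes it below -/
import Mathlib

section
/- For the chain P_n with P_n(i,i−1)=1 for i ≥ 1, P_n(0,0)=1−1/(n+1), P_n(0,n)=1/(n+1), one has sup_{n≥1} [P_n^m(0,0) − π_n(0)] ≥ 1/2 for every m ≥ 1; in particular uniform-in-n convergence to stationarity fails even though the expected return time to {0} from 0 is at most 2 for all n. -/
open scoped BigOperators

/-- The transition matrix of Example 2: `P_n(i,i-1) = 1` for `i ≥ 1`,
`P_n(0,0) = 1 - 1/(n+1)`, `P_n(0,n) = 1/(n+1)`. -/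
noncomputable def counterP (n : ℕ) (i j : ℕ) : ℝ :=
  if i = 0 then
    (if j = 0 then 1 - 1/(n+1) else if j = n then 1/(n+1) else 0)
  else
    (if j = i - 1 then 1 else 0)

/-- `m`-step transition probabilities of `counterP n`. -/
noncomputable def counterPpow (n : ℕ) : ℕ → ℕ → ℕ → ℝ
  | 0 => fun i j => if i = j then 1 else 0
  | m + 1 => fun i j => ∑' k, counterPpow n m i k * counterP n k j

lemma counterP_nonneg (n i j : ℕ) : 0 ≤ counterP n i j := by
  unfold counterP
  have h : (1:ℝ)/(n+1) ≤ 1 := by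
    rw [div_le_one (by positivity)]
    have : (0:ℝ) ≤ (n:ℝ) := Nat.cast_nonneg n
    linarith
  split_ifs <;> [linarith; positivity; norm_num; norm_num; norm_num]

lemma counterPpow_nonneg (n m i j : ℕ) : 0 ≤ counterPpow n m i j := by
  induction m generalizing i j with
  | zero => unfold counterPpow; split_ifs <;> norm_num
  | succ m ih =>
    unfold counterPpow
    exact tsum_nonneg fun k => mul_nonneg (ih i k) (counterP_nonneg n k j)

/-- Two-term recursion: only `k = 0` and `k = j+1` can move to `j`. -/
lemma counterPpow_succ (n m i j : ℕ) :
    counterPpow n (m+1) i j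
      = counterPpow n m i 0 * counterP n 0 j + counterPpow n m i (j+1) := by
  have hzero : ∀ k ∉ ({0, j+1} : Finset ℕ),
      counterPpow n m i k * counterP n k j = 0 := by
    intro k hk
    simp only [Finset.mem_insert, Finset.mem_singleton, not_or] at hk
    have h1 : counterP n k j = 0 := by
      unfold counterP
      rw [if_neg hk.1, if_neg]
      intro h
      apply hk.2
      omega
    rw [h1, mul_zero]
  show (∑' k, counterPpow n m i k * counterP n k j) = _
  rw [tsum_eq_sum hzero, Finset.sum_pair (by omega : (0:ℕ) ≠ j+1)]
  have h2 : counterP n (j+1) j = 1 := by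
    unfold counterP
    rw [if_neg (by omega), if_pos (by omega)]
  rw [h2, mul_one]

/-- Starting from `0`, the chain stays in `{0, ..., n}`. -/
lemma counterPpow_support (n m j : ℕ) (hn : 1 ≤ n) (hj : n < j) :
    counterPpow n m 0 j = 0 := by
  induction m generalizing j with
  | zero => unfold counterPpow; rw [if_neg (by omega)]
  | succ m ih =>
    rw [counterPpow_succ]
    have h1 : counterP n 0 j = 0 := by
      unfold counterP
      rw [if_pos rfl, if_neg (by omega), if_neg (by omega)]
    rw [h1, mul_zero, zero_add, ih (j+1) (by omega)]

/-- Row sum invariant: the mass starting from `0` is always `1`. -/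
lemma counterPpow_rowsum (n : ℕ) (hn : 1 ≤ n) (m : ℕ) :
    ∑ j ∈ Finset.range (n+1), counterPpow n m 0 j = 1 := by
  induction m with
  | zero =>
    unfold counterPpow
    rw [Finset.sum_ite_eq (Finset.range (n+1)) 0 (fun _ => (1:ℝ))]
    rw [if_pos (Finset.mem_range.mpr (by omega))]
  | succ m ih =>
    have key : ∀ j ∈ Finset.range (n+1), counterPpow n (m+1) 0 j
        = counterPpow n m 0 0 * counterP n 0 j + counterPpow n m 0 (j+1) :=
      fun j _ => counterPpow_succ n m 0 j
    rw [Finset.sum_congr rfl key, Finset.sum_add_distrib, ← Finset.mul_sum]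
    have hP : ∑ j ∈ Finset.range (n+1), counterP n 0 j = 1 := by
      have hsub : ({0, n} : Finset ℕ) ⊆ Finset.range (n+1) := by
        intro x hx
        simp only [Finset.mem_insert, Finset.mem_singleton] at hx
        rcases hx with rfl | rfl <;> simp [Finset.mem_range]
      rw [← Finset.sum_subset hsub]
      · rw [Finset.sum_pair (by omega : (0:ℕ) ≠ n)]
        have h0 : counterP n 0 0 = 1 - 1/(n+1) := by
          unfold counterP; rw [if_pos rfl, if_pos rfl]
        have h1 : counterP n 0 n = 1/(n+1) := by
          unfold counterP; rw [if_pos rfl, if_neg (by omega), if_pos rfl]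
        rw [h0, h1]; ring
      · intro x _ hx
        simp only [Finset.mem_insert, Finset.mem_singleton, not_or] at hx
        unfold counterP
        rw [if_pos rfl, if_neg hx.1, if_neg hx.2]
    have hshift : ∑ j ∈ Finset.range (n+1), counterPpow n m 0 (j+1)
        = 1 - counterPpow n m 0 0 := by
      have h2 : ∑ j ∈ Finset.range (n+2), counterPpow n m 0 j
          = ∑ j ∈ Finset.range (n+1), counterPpow n m 0 (j+1)
            + counterPpow n m 0 0 := Finset.sum_range_succ' _ (n+1)
      rw [Finset.sum_range_succ, ih, counterPpow_support n m (n+1) hn (by omega)]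
        at h2
      linarith
    rw [hP, hshift, mul_one]
    ring

lemma counterPpow_le_one (n : ℕ) (hn : 1 ≤ n) (m : ℕ) :
    counterPpow n m 0 0 ≤ 1 := by
  have h := counterPpow_rowsum n hn m
  have h2 : counterPpow n m 0 0 ≤ ∑ j ∈ Finset.range (n+1), counterPpow n m 0 j := by
    apply Finset.single_le_sum (fun j _ => counterPpow_nonneg n m 0 j)
    exact Finset.mem_range.mpr (by omega)
  linarith

lemma counterPpow_ge (n m : ℕ) :
    (1 - 1/((n:ℝ)+1))^m ≤ counterPpow n m 0 0 := by
  induction m with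
  | zero => unfold counterPpow; norm_num
  | succ m ih =>
    rw [counterPpow_succ]
    have hP : counterP n 0 0 = 1 - 1/((n:ℝ)+1) := by
      unfold counterP; rw [if_pos rfl, if_pos rfl]
    have hpos : (0:ℝ) ≤ 1 - 1/((n:ℝ)+1) := by
      have h : (1:ℝ)/((n:ℝ)+1) ≤ 1 := by
        rw [div_le_one (by positivity)]
        have : (0:ℝ) ≤ (n:ℝ) := Nat.cast_nonneg n
        linarith
      linarith
    have h1 : (1 - 1/((n:ℝ)+1))^(m+1) ≤ counterPpow n m 0 0 * counterP n 0 0 := by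
      rw [hP, pow_succ]
      exact mul_le_mul_of_nonneg_right ih hpos
    have h2 := counterPpow_nonneg n m 0 1
    linarith

/-- For every `m ≥ 1`,
`sup_{n ≥ 1} [P_n^m(0,0) - π_n(0)] ≥ 1/2`, so uniform-in-`n` convergence to stationarity
fails, even though the expected return time to `{0}` from `0`, namely
`1·(1 - 1/(n+1)) + (n+1)·(1/(n+1))`, is at most `2` for all `n ≥ 1`. -/
theorem counterP_no_uniform_convergence :
    (∀ m : ℕ, 1 ≤ m →
      (1/2 : ℝ) ≤ ⨆ n : {n : ℕ // 1 ≤ n},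
        (counterPpow n m 0 0 - (2 - 1/((n : ℝ) + 1))⁻¹)) ∧
    (∀ n : ℕ, 1 ≤ n →
      1 * (1 - 1/((n : ℝ) + 1)) + ((n : ℝ) + 1) * (1/((n : ℝ) + 1)) ≤ 2) := by
  constructor
  · intro m _
    set f : {n : ℕ // 1 ≤ n} → ℝ :=
      fun n => counterPpow n m 0 0 - (2 - 1/((n : ℝ) + 1))⁻¹ with hf
    have hbdd : BddAbove (Set.range f) := by
      refine ⟨1, ?_⟩
      rintro x ⟨n, rfl⟩
      have h1 := counterPpow_le_one n n.2 m
      have h2 : (0:ℝ) ≤ (2 - 1/((n : ℝ) + 1))⁻¹ := by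
        have h3 : (1:ℝ)/((n:ℝ)+1) ≤ 1 := by
          rw [div_le_one (by positivity)]
          have : (0:ℝ) ≤ ((n:ℕ):ℝ) := Nat.cast_nonneg _
          linarith
        have : (0:ℝ) ≤ 2 - 1/((n:ℝ)+1) := by linarith
        positivity
      simp only [hf]
      linarith
    -- each value of the explicit lower bound is ≤ the sup
    have hle : ∀ k : ℕ,
        (1 - 1/((k:ℝ)+2))^m - (2 - 1/((k:ℝ)+2))⁻¹ ≤ ⨆ n, f n := by
      intro k
      have hsup := le_ciSup hbdd (⟨k+1, by omega⟩ : {n : ℕ // 1 ≤ n})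
      have hge := counterPpow_ge (k+1) m
      have hcast : (((k+1:ℕ)):ℝ) + 1 = (k:ℝ) + 2 := by push_cast; ring
      simp only [hf] at hsup
      calc (1 - 1/((k:ℝ)+2))^m - (2 - 1/((k:ℝ)+2))⁻¹
          ≤ counterPpow (k+1) m 0 0 - (2 - 1/((k:ℝ)+2))⁻¹ := by
            rw [← hcast]; linarith
        _ ≤ ⨆ n, f n := by rw [← hcast]; exact hsup
    -- the lower bound tends to 1/2
    have htend : Filter.Tendsto
        (fun k : ℕ => (1 - 1/((k:ℝ)+2))^m - (2 - 1/((k:ℝ)+2))⁻¹)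
        Filter.atTop (nhds (1/2)) := by
      have h0 : Filter.Tendsto (fun k : ℕ => 1/((k:ℝ)+2)) Filter.atTop (nhds 0) := by
        have h1 : Filter.Tendsto (fun k : ℕ => (k:ℝ)+2) Filter.atTop Filter.atTop :=
          Filter.tendsto_atTop_add_const_right _ 2 tendsto_natCast_atTop_atTop
        simpa [one_div, Function.comp_def] using tendsto_inv_atTop_zero.comp h1
      have h1 : Filter.Tendsto (fun k : ℕ => (1 - 1/((k:ℝ)+2))^m)
          Filter.atTop (nhds 1) := by
        have := ((tendsto_const_nhds (x := (1:ℝ))).sub h0).pow m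
        simpa using this
      have h2 : Filter.Tendsto (fun k : ℕ => (2 - 1/((k:ℝ)+2))⁻¹)
          Filter.atTop (nhds (1/2)) := by
        have h3 := ((tendsto_const_nhds (x := (2:ℝ))).sub h0).inv₀ (by norm_num)
        simpa using h3
      have h4 : (1:ℝ)/2 = 1 - 1/2 := by norm_num
      rw [h4]
      exact h1.sub h2
    exact le_of_tendsto htend (Filter.Eventually.of_forall hle)
  · intro n hn
    have h : ((n:ℝ)+1) ≠ 0 := by positivity
    have h3 : (0:ℝ) < 1/((n:ℝ)+1) := by positivity
    have h4 : ((n:ℝ)+1) * (1/((n:ℝ)+1)) = 1 := by field_simp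
    rw [h4, one_mul]
    linarith
end

section
/- Let π be a probability distribution on ℤ≥0 with π(x) > 0 for all x, let P̄(x) = ∑_{y≥x} π(y), and define r(x) = P̄(x)^{-1/2}. Then r is nonnegative, nondecreasing, coercive (r(x) → ∞), and ∑_{k=0}^∞ r(k) π(k) ≤ 2. -/
open Filter

/-- If `π` is a probability on `ℤ₊` with `π(x) > 0` for all `x`,
`P̄(x) = ∑_{y ≥ x} π(y)` and `r(x) = P̄(x)^{-1/2}`, then `r` is nonnegative,
nondecreasing and coercive (`r(x) → ∞`), and `∑_k r(k) π(k) ≤ 2`. -/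
theorem tail_sqrt_moment
    (π : ℕ → ℝ) (hπ_pos : ∀ x, 0 < π x) (hπ_prob : HasSum π 1)
    (Pbar : ℕ → ℝ) (hPbar : ∀ x, Pbar x = ∑' y, if x ≤ y then π y else 0)
    (r : ℕ → ℝ) (hr : ∀ x, r x = (Pbar x) ^ (-(1/2) : ℝ)) :
    (∀ x, 0 ≤ r x) ∧ Monotone r ∧ Tendsto r atTop atTop ∧
      ∑' k, r k * π k ≤ 2 := by
  have hsum : Summable π := hπ_prob.summable
  have hπ0 : ∀ x, 0 ≤ π x := fun x => (hπ_pos x).le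
  have hgs : ∀ x, Summable (fun y => if x ≤ y then π y else 0) := by
    intro x
    refine Summable.of_nonneg_of_le (fun y => ?_) (fun y => ?_) hsum
    · split <;> simp [hπ0 y]
    · split <;> simp [hπ0 y]
  -- positivity of Pbar
  have hPbar_pos : ∀ x, 0 < Pbar x := by
    intro x
    rw [hPbar]
    calc 0 < π x := hπ_pos x
    _ = (if x ≤ x then π x else 0) := by simp
    _ ≤ ∑' y, if x ≤ y then π y else 0 := by
        refine Summable.le_tsum (hgs x) x (fun j _ => ?_)
        split <;> simp [hπ0 j]
  -- Pbar x = π x + Pbar (x+1)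
  have hstep : ∀ x, Pbar x = π x + Pbar (x + 1) := by
    intro x
    rw [hPbar x, hPbar (x + 1)]
    have hfun : (fun y => if x ≤ y then π y else 0)
        = fun y => (if y = x then π x else 0) + (if x + 1 ≤ y then π y else 0) := by
      funext y
      rcases lt_trichotomy y x with h | h | h
      · have h1 : ¬ x ≤ y := by omega
        have h2 : y ≠ x := by omega
        have h3 : ¬ x + 1 ≤ y := by omega
        simp [h1, h2, h3]
      · simp [h, show ¬ x + 1 ≤ x by omega]
      · have h1 : x ≤ y := by omega
        have h2 : y ≠ x := by omega
        have h3 : x + 1 ≤ y := by omega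
        simp [h1, h2, h3]
    rw [hfun, Summable.tsum_add (hasSum_ite_eq x (π x)).summable (hgs (x + 1)),
      (hasSum_ite_eq x (π x)).tsum_eq]
  have hPbar_succ_le : ∀ x, Pbar (x + 1) ≤ Pbar x := fun x => by
    have := hstep x; linarith [hπ0 x]
  have hPbar_anti : Antitone Pbar := antitone_nat_of_succ_le hPbar_succ_le
  have hPbar0 : Pbar 0 = 1 := by
    rw [hPbar]
    simpa using hπ_prob.tsum_eq
  -- partial sums identity
  have hpartial : ∀ n, (∑ k ∈ Finset.range n, π k) + Pbar n = 1 := by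
    intro n
    induction n with
    | zero => simpa using hPbar0
    | succ m ih =>
      rw [Finset.sum_range_succ]
      have := hstep m
      linarith
  -- Pbar tends to 0
  have hPbar_tendsto : Tendsto Pbar atTop (nhds 0) := by
    have h1 : Tendsto (fun n => ∑ k ∈ Finset.range n, π k) atTop (nhds 1) :=
      hπ_prob.tendsto_sum_nat
    have h2 : Tendsto (fun n => 1 - ∑ k ∈ Finset.range n, π k) atTop (nhds (1 - 1)) :=
      tendsto_const_nhds.sub h1
    simp only [sub_self] at h2
    refine h2.congr (fun n => ?_)
    have := hpartial n; linarith
  -- r in terms of sqrt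
  have hr' : ∀ x, r x = (Real.sqrt (Pbar x))⁻¹ := by
    intro x
    rw [hr, Real.rpow_neg (hPbar_pos x).le, ← Real.sqrt_eq_rpow]
  have hsqrt_pos : ∀ x, 0 < Real.sqrt (Pbar x) := fun x => Real.sqrt_pos.2 (hPbar_pos x)
  have hr_nonneg : ∀ x, 0 ≤ r x := fun x => by
    rw [hr' x]; exact inv_nonneg.2 (Real.sqrt_nonneg _)
  have hr_mono : Monotone r := by
    intro x y hxy
    rw [hr' x, hr' y]
    exact inv_anti₀ (hsqrt_pos y)
      (Real.sqrt_le_sqrt (hPbar_anti hxy))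
  have hr_tendsto : Tendsto r atTop atTop := by
    have hs : Tendsto (fun x => Real.sqrt (Pbar x)) atTop (nhdsWithin 0 (Set.Ioi 0)) := by
      rw [tendsto_nhdsWithin_iff]
      constructor
      · have := (Real.continuous_sqrt.tendsto 0).comp hPbar_tendsto
        simpa [Function.comp_def] using this
      · exact Filter.Eventually.of_forall fun x => hsqrt_pos x
    have := hs.inv_tendsto_nhdsGT_zero
    refine this.congr (fun x => ?_)
    simp [hr' x]
  refine ⟨hr_nonneg, hr_mono, hr_tendsto, ?_⟩
  -- key inequality
  have key : ∀ k, r k * π k ≤ 2 * (Real.sqrt (Pbar k) - Real.sqrt (Pbar (k + 1))) := by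
    intro k
    have ha := hPbar_pos k
    have hb := hPbar_pos (k + 1)
    have hsa := hsqrt_pos k
    have hsb := hsqrt_pos (k + 1)
    have hle : Real.sqrt (Pbar (k + 1)) ≤ Real.sqrt (Pbar k) :=
      Real.sqrt_le_sqrt (hPbar_succ_le k)
    have hπk : π k = Pbar k - Pbar (k + 1) := by have := hstep k; linarith
    have hsq1 : Real.sqrt (Pbar k) * Real.sqrt (Pbar k) = Pbar k :=
      Real.mul_self_sqrt ha.le
    have hsq2 : Real.sqrt (Pbar (k + 1)) * Real.sqrt (Pbar (k + 1)) = Pbar (k + 1) :=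
      Real.mul_self_sqrt hb.le
    rw [hr' k, hπk, inv_mul_eq_div, div_le_iff₀ hsa]
    nlinarith [sq_nonneg (Real.sqrt (Pbar k) - Real.sqrt (Pbar (k + 1)))]
  have hbound : ∀ n, ∑ k ∈ Finset.range n, r k * π k ≤ 2 := fun n => ?_
  · exact Summable.tsum_le_of_sum_range_le
      (summable_of_sum_range_le (fun k => mul_nonneg (hr_nonneg k) (hπ0 k)) hbound) hbound
  calc ∑ k ∈ Finset.range n, r k * π k
      ≤ ∑ k ∈ Finset.range n, 2 * (Real.sqrt (Pbar k) - Real.sqrt (Pbar (k + 1))) :=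
        Finset.sum_le_sum fun k _ => key k
    _ = 2 * (Real.sqrt (Pbar 0) - Real.sqrt (Pbar n)) := by
        rw [← Finset.mul_sum, Finset.sum_range_sub' (fun k => Real.sqrt (Pbar k))]
    _ ≤ 2 := by
        have h0 : Real.sqrt (Pbar 0) = 1 := by rw [hPbar0, Real.sqrt_one]
        have := Real.sqrt_nonneg (Pbar n)
        rw [h0]; linarith
end

section
/- Let X be strongly uniformly recurrent under P (P(x,dy) ≥ λφ(dy) for all x) with unique stationary distribution π, and let P_n be arbitrary general augmentations associated with any increasing truncation sequence A_n ↑ S, with φ supported on A_1. Then each P_n is strongly uniformly recurrent with unique stationary distribution π_n, and sup_{A⊆S} |π_n(A) − π(A)| → 0 as n → ∞. -/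
open MeasureTheory ProbabilityTheory Filter Topology
open scoped ENNReal Classical
set_option linter.unusedSectionVars false
set_option linter.unusedVariables false

namespace SURAux

variable {S : Type*} [MeasurableSpace S]

/-- iterates of a sub-Markov map `f` starting from `μ0` -/
noncomputable def iter (f : S → Measure S) (μ0 : Measure S) : ℕ → Measure S
  | 0 => μ0
  | k + 1 => (iter f μ0 k).bind f

@[simp] lemma iter_zero (f : S → Measure S) (μ0 : Measure S) : iter f μ0 0 = μ0 := rfl

@[simp] lemma iter_succ (f : S → Measure S) (μ0 : Measure S) (k : ℕ) :
    iter f μ0 (k + 1) = (iter f μ0 k).bind f := rfl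

lemma bind_add (μ ν : Measure S) {f : S → Measure S} (hf : Measurable f) :
    (μ + ν).bind f = μ.bind f + ν.bind f := by
  ext B hB
  simp [Measure.bind_apply hB hf.aemeasurable, lintegral_add_measure]

lemma bind_smul (c : ℝ≥0∞) (μ : Measure S) {f : S → Measure S} (hf : Measurable f) :
    (c • μ).bind f = c • μ.bind f := by
  ext B hB
  simp [Measure.bind_apply hB hf.aemeasurable, lintegral_smul_measure]

/-- the residual sub-kernel `K - lam • φ` on `A` -/
noncomputable def q (K : Kernel S S) (lam : ℝ≥0∞) (φ : Measure S) (A : Set S) : S → Measure S :=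
  fun x => if x ∈ A then K x - lam • φ else 0

structure Setting (K : Kernel S S) (lam : ℝ≥0∞) (φ : Measure S) (A : Set S) : Prop where
  hA : MeasurableSet A
  hφA : φ Aᶜ = 0
  hm : ∀ x ∈ A, ∀ B : Set S, MeasurableSet B → lam * φ B ≤ K x B
  hinto : ∀ x ∈ A, K x A = 1
  hlam0 : 0 < lam

namespace Setting

variable {K : Kernel S S} {lam : ℝ≥0∞} {φ : Measure S} {A : Set S}
variable [IsMarkovKernel K] [IsProbabilityMeasure φ]

lemma φA (hs : Setting K lam φ A) : φ A = 1 := by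
  have h := measure_add_measure_compl (μ := φ) hs.hA
  rw [hs.hφA, add_zero] at h
  simpa using h

lemma lam_le_one (hs : Setting K lam φ A) : lam ≤ 1 := by
  obtain ⟨x, hx⟩ : A.Nonempty := by
    apply nonempty_of_measure_ne_zero (μ := φ)
    rw [hs.φA]; exact one_ne_zero
  have := hs.hm x hx Set.univ MeasurableSet.univ
  simpa using this

lemma lam_ne_top (hs : Setting K lam φ A) : lam ≠ ⊤ :=
  ne_top_of_le_ne_top ENNReal.one_ne_top hs.lam_le_one

lemma smul_finite (hs : Setting K lam φ A) : IsFiniteMeasure (lam • φ) := by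
  constructor
  rw [Measure.smul_apply, smul_eq_mul, measure_univ, mul_one]
  exact lt_of_le_of_lt hs.lam_le_one (by norm_num)

lemma le_K (hs : Setting K lam φ A) {x : S} (hx : x ∈ A) : lam • φ ≤ K x :=
  Measure.le_iff.mpr fun B hB => by
    rw [Measure.smul_apply, smul_eq_mul]; exact hs.hm x hx B hB

lemma q_apply (hs : Setting K lam φ A) {x : S} (hx : x ∈ A) {B : Set S}
    (hB : MeasurableSet B) : q K lam φ A x B = K x B - lam * φ B := by
  haveI := hs.smul_finite
  rw [q, if_pos hx, Measure.sub_apply hB (hs.le_K hx), Measure.smul_apply, smul_eq_mul]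

lemma q_add_cancel (hs : Setting K lam φ A) {x : S} (hx : x ∈ A) {B : Set S}
    (hB : MeasurableSet B) : q K lam φ A x B + lam * φ B = K x B := by
  rw [hs.q_apply hx hB]
  exact tsub_add_cancel_of_le (hs.hm x hx B hB)

lemma q_mble (hs : Setting K lam φ A) : Measurable (q K lam φ A) := by
  apply Measure.measurable_of_measurable_coe
  intro B hB
  have heq : (fun x => q K lam φ A x B)
      = fun x => if x ∈ A then K x B - lam * φ B else 0 := by
    funext x
    by_cases hx : x ∈ A
    · rw [hs.q_apply hx hB, if_pos hx]
    · simp [q, hx]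
  rw [heq]
  exact Measurable.ite hs.hA ((Kernel.measurable_coe K hB).sub measurable_const)
    measurable_const

lemma q_univ (hs : Setting K lam φ A) {x : S} (hx : x ∈ A) :
    q K lam φ A x Set.univ = 1 - lam := by
  rw [hs.q_apply hx MeasurableSet.univ]
  simp

lemma q_compl (hs : Setting K lam φ A) {x : S} (hx : x ∈ A) :
    q K lam φ A x Aᶜ = 0 := by
  rw [hs.q_apply hx hs.hA.compl]
  have hKc : K x Aᶜ = 0 := by
    rw [measure_compl hs.hA (measure_ne_top _ _), hs.hinto x hx, measure_univ, tsub_self]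
  rw [hKc, zero_tsub]

lemma ae_mem (hs : Setting K lam φ A) {ρ : Measure S} (hρ : ρ Aᶜ = 0) :
    ∀ᵐ x ∂ρ, x ∈ A := by
  rw [MeasureTheory.ae_iff]
  simpa [Set.compl_def] using hρ

lemma step_compl (hs : Setting K lam φ A) {ρ : Measure S} (hρ : ρ Aᶜ = 0) :
    (ρ.bind (q K lam φ A)) Aᶜ = 0 := by
  rw [Measure.bind_apply hs.hA.compl hs.q_mble.aemeasurable]
  have : ∫⁻ x, q K lam φ A x Aᶜ ∂ρ = ∫⁻ _, 0 ∂ρ :=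
    lintegral_congr_ae ((hs.ae_mem hρ).mono fun x hx => hs.q_compl hx)
  simpa using this

lemma step_univ (hs : Setting K lam φ A) {ρ : Measure S} (hρ : ρ Aᶜ = 0) :
    (ρ.bind (q K lam φ A)) Set.univ = (1 - lam) * ρ Set.univ := by
  rw [Measure.bind_apply MeasurableSet.univ hs.q_mble.aemeasurable]
  have : ∫⁻ x, q K lam φ A x Set.univ ∂ρ = ∫⁻ _, (1 - lam) ∂ρ :=
    lintegral_congr_ae ((hs.ae_mem hρ).mono fun x hx => hs.q_univ hx)
  rw [this, lintegral_const]

lemma step_bindK (hs : Setting K lam φ A) {ρ : Measure S} (hρ : ρ Aᶜ = 0)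
    {B : Set S} (hB : MeasurableSet B) :
    ∫⁻ x, K x B ∂ρ = (ρ.bind (q K lam φ A)) B + lam * φ B * ρ Set.univ := by
  have : ∫⁻ x, K x B ∂ρ = ∫⁻ x, (q K lam φ A x B + lam * φ B) ∂ρ :=
    lintegral_congr_ae ((hs.ae_mem hρ).mono fun x hx => (hs.q_add_cancel hx hB).symm)
  rw [this, lintegral_add_right _ measurable_const, lintegral_const,
    Measure.bind_apply hB hs.q_mble.aemeasurable]

lemma iter_compl (hs : Setting K lam φ A) {μ0 : Measure S} (h0 : μ0 Aᶜ = 0) :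
    ∀ k, iter (q K lam φ A) μ0 k Aᶜ = 0 := by
  intro k
  induction k with
  | zero => exact h0
  | succ k ih => exact hs.step_compl ih

lemma iter_univ (hs : Setting K lam φ A) {μ0 : Measure S} (h0 : μ0 Aᶜ = 0) :
    ∀ k, iter (q K lam φ A) μ0 k Set.univ = (1 - lam) ^ k * μ0 Set.univ := by
  intro k
  induction k with
  | zero => simp
  | succ k ih =>
    rw [iter_succ, hs.step_univ (hs.iter_compl h0 k), ih, pow_succ]
    ring



end Setting

/-- candidate stationary measure -/
noncomputable def statM (K : Kernel S S) (lam : ℝ≥0∞) (φ : Measure S) (A : Set S) :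
    Measure S :=
  lam • Measure.sum (iter (q K lam φ A) φ)

namespace Setting

variable {K : Kernel S S} {lam : ℝ≥0∞} {φ : Measure S} {A : Set S}
variable [IsMarkovKernel K] [IsProbabilityMeasure φ]

lemma statM_apply (hs : Setting K lam φ A) {B : Set S} (hB : MeasurableSet B) :
    statM K lam φ A B = lam * ∑' k, iter (q K lam φ A) φ k B := by
  rw [statM, Measure.smul_apply, Measure.sum_apply _ hB, smul_eq_mul]

lemma nu_univ (hs : Setting K lam φ A) (k : ℕ) :
    iter (q K lam φ A) φ k Set.univ = (1 - lam) ^ k := by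
  rw [hs.iter_univ hs.hφA k, measure_univ, mul_one]

lemma statM_univ (hs : Setting K lam φ A) : statM K lam φ A Set.univ = 1 := by
  rw [hs.statM_apply MeasurableSet.univ]
  have : ∀ k, iter (q K lam φ A) φ k Set.univ = (1 - lam) ^ k := hs.nu_univ
  rw [tsum_congr this, ENNReal.tsum_geometric,
    ENNReal.sub_sub_cancel ENNReal.one_ne_top hs.lam_le_one,
    ENNReal.mul_inv_cancel hs.hlam0.ne' hs.lam_ne_top]

lemma statM_prob (hs : Setting K lam φ A) : IsProbabilityMeasure (statM K lam φ A) :=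
  ⟨hs.statM_univ⟩

lemma statM_compl (hs : Setting K lam φ A) : statM K lam φ A Aᶜ = 0 := by
  rw [hs.statM_apply hs.hA.compl]
  have : ∀ k, iter (q K lam φ A) φ k Aᶜ = 0 := hs.iter_compl hs.hφA
  rw [tsum_congr this]
  simp

lemma statM_stationary (hs : Setting K lam φ A) :
    (statM K lam φ A).bind (fun x => K x) = statM K lam φ A := by
  ext B hB
  have hmble : Measurable (fun x => K x : S → Measure S) := K.measurable
  calc ((statM K lam φ A).bind (fun x => K x)) B
      = ∫⁻ x, K x B ∂(statM K lam φ A) := Measure.bind_apply hB hmble.aemeasurable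
    _ = lam * ∑' k, ∫⁻ x, K x B ∂(iter (q K lam φ A) φ k) := by
        rw [statM, lintegral_smul_measure, lintegral_sum_measure, smul_eq_mul]
    _ = lam * ∑' k, (iter (q K lam φ A) φ (k + 1) B + lam * φ B * (1 - lam) ^ k) := by
        congr 1
        refine tsum_congr fun k => ?_
        rw [iter_succ, hs.step_bindK (hs.iter_compl hs.hφA k) hB, hs.nu_univ]
    _ = lam * ((∑' k, iter (q K lam φ A) φ (k + 1) B) + lam * φ B * lam⁻¹) := by
        rw [ENNReal.tsum_add, ENNReal.tsum_mul_left, ENNReal.tsum_geometric,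
          ENNReal.sub_sub_cancel ENNReal.one_ne_top hs.lam_le_one]
    _ = lam * (φ B + ∑' k, iter (q K lam φ A) φ (k + 1) B) := by
        rw [mul_comm lam (φ B), mul_assoc,
          ENNReal.mul_inv_cancel hs.hlam0.ne' hs.lam_ne_top, mul_one, add_comm]
    _ = lam * ∑' k, iter (q K lam φ A) φ k B := by
        rw [tsum_eq_zero_add' (f := fun k => iter (q K lam φ A) φ k B) ENNReal.summable]
        simp
    _ = statM K lam φ A B := (hs.statM_apply hB).symm

lemma statM_unique (hs : Setting K lam φ A) (μ : Measure S)
    (hμp : IsProbabilityMeasure μ) (hμA : μ Aᶜ = 0)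
    (hstat : μ.bind (fun x => K x) = μ) : μ = statM K lam φ A := by
  set Q := q K lam φ A with hQ
  -- decomposition
  have hdec : ∀ k, iter Q μ k = lam • iter Q φ k + iter Q μ (k + 1) := by
    intro k
    induction k with
    | zero =>
      ext B hB
      have h1 : μ B = ∫⁻ x, K x B ∂μ := by
        conv_lhs => rw [← hstat]
        exact Measure.bind_apply hB K.measurable.aemeasurable
      have h2 : ∫⁻ x, K x B ∂μ = (μ.bind Q) B + lam * φ B * μ Set.univ :=
        hs.step_bindK hμA hB
      simp only [iter_zero, iter_succ, Measure.add_apply, Measure.smul_apply,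
        smul_eq_mul]
      rw [h1, h2, measure_univ, mul_one]
      ring
    | succ k ih =>
      calc iter Q μ (k + 1) = (iter Q μ k).bind Q := rfl
        _ = (lam • iter Q φ k + iter Q μ (k + 1)).bind Q := by rw [← ih]
        _ = lam • iter Q φ (k + 1) + iter Q μ (k + 2) := by
            rw [bind_add _ _ hs.q_mble, bind_smul _ _ hs.q_mble]
            rfl
  have hpart : ∀ k, ∀ B : Set S, MeasurableSet B →
      μ B = lam * (∑ j ∈ Finset.range k, iter Q φ j B) + iter Q μ k B := by
    intro k
    induction k with
    | zero => intro B hB; simp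
    | succ k ih =>
      intro B hB
      rw [ih B hB, Finset.sum_range_succ, mul_add]
      have : iter Q μ k B = lam * iter Q φ k B + iter Q μ (k + 1) B := by
        rw [hdec k]; simp [Measure.add_apply]
      rw [this]
      ring
  ext B hB
  have hlim1 : Tendsto (fun k => lam * ∑ j ∈ Finset.range k, iter Q φ j B) atTop
      (𝓝 (lam * ∑' j, iter Q φ j B)) :=
    ENNReal.Tendsto.const_mul (ENNReal.tendsto_nat_tsum _) (Or.inr hs.lam_ne_top)
  have hlim2 : Tendsto (fun k => iter Q μ k B) atTop (𝓝 0) := by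
    have hub : ∀ k, iter Q μ k B ≤ (1 - lam) ^ k := fun k => by
      calc iter Q μ k B ≤ iter Q μ k Set.univ := measure_mono (Set.subset_univ B)
        _ = (1 - lam) ^ k * μ Set.univ := hs.iter_univ hμA k
        _ = (1 - lam) ^ k := by rw [measure_univ, mul_one]
    have hpow : Tendsto (fun k : ℕ => (1 - lam) ^ k) atTop (𝓝 0) :=
      ENNReal.tendsto_pow_atTop_nhds_zero_of_lt_one
        (ENNReal.sub_lt_self ENNReal.one_ne_top one_ne_zero hs.hlam0.ne')
    exact tendsto_of_tendsto_of_tendsto_of_le_of_le tendsto_const_nhds hpow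
      (fun k => zero_le) hub
  have hlim : Tendsto (fun k => lam * (∑ j ∈ Finset.range k, iter Q φ j B)
      + iter Q μ k B) atTop (𝓝 (lam * ∑' j, iter Q φ j B + 0)) := hlim1.add hlim2
  have hconst : (fun k => lam * (∑ j ∈ Finset.range k, iter Q φ j B) + iter Q μ k B)
      = fun _ => μ B := funext fun k => (hpart k B hB).symm
  rw [hconst] at hlim
  have := tendsto_nhds_unique tendsto_const_nhds hlim
  rw [this, add_zero, hs.statM_apply hB]

lemma exu (hs : Setting K lam φ A) :
    ∃! m : Measure S, IsProbabilityMeasure m ∧ m Aᶜ = 0 ∧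
      m.bind (fun x => K x) = m := by
  refine ⟨statM K lam φ A, ⟨hs.statM_prob, hs.statM_compl, hs.statM_stationary⟩, ?_⟩
  rintro m ⟨h1, h2, h3⟩
  exact hs.statM_unique m h1 h2 h3

end Setting


/-- auxiliary geometric-type recursion -/
noncomputable def cseq (lam : ℝ≥0∞) (b : ℕ → ℝ≥0∞) : ℕ → ℝ≥0∞
  | 0 => 0
  | k + 1 => (1 - lam) * cseq lam b k + b k

/-- Key comparison: the stationary measure of the augmented kernel `K` on `An`
is close to the stationary measure of `P`. -/
lemma compare {P K : Kernel S S} {lam : ℝ≥0∞} {φ : Measure S} {An : Set S}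
    [IsMarkovKernel P] [IsMarkovKernel K] [IsProbabilityMeasure φ]
    (hsP : Setting P lam φ Set.univ) (hsK : Setting K lam φ An)
    (hge : ∀ x ∈ An, ∀ B ⊆ An, MeasurableSet B → P x B ≤ K x B)
    {B : Set S} (hB : MeasurableSet B) :
    statM P lam φ Set.univ B ≤ statM K lam φ An B
      + lam⁻¹ * statM P lam φ Set.univ Anᶜ := by
  have hAn : MeasurableSet An := hsK.hA
  set R := q P lam φ Set.univ with hR
  have hRm : Measurable R := hsP.q_mble
  set μs := iter R φ with hμs
  set νs := iter (q K lam φ An) φ with hνs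
  set κ := iter (fun x => (R x).restrict An) φ with hκ
  have hrestr_m : Measurable (fun x => (R x).restrict An) := by
    apply Measure.measurable_of_measurable_coe
    intro C hC
    have : (fun x => (R x).restrict An C) = fun x => R x (C ∩ An) :=
      funext fun x => Measure.restrict_apply hC
    rw [this]
    exact (Measure.measurable_coe (hC.inter hAn)).comp hRm
  -- κ ≤ μs
  have hκμ : ∀ k, κ k ≤ μs k := by
    intro k
    induction k with
    | zero => exact le_rfl
    | succ k ih =>
      refine Measure.le_iff.mpr fun B hB => ?_
      rw [hκ, hμs, iter_succ, iter_succ, Measure.bind_apply hB hrestr_m.aemeasurable,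
        Measure.bind_apply hB hRm.aemeasurable]
      calc ∫⁻ x, (R x).restrict An B ∂(κ k)
          = ∫⁻ x, R x (B ∩ An) ∂(κ k) :=
            lintegral_congr fun x => Measure.restrict_apply hB
        _ ≤ ∫⁻ x, R x B ∂(μs k) :=
            lintegral_mono' ih fun x => measure_mono Set.inter_subset_left
  have hκfin : ∀ k, IsFiniteMeasure (κ k) := by
    intro k
    constructor
    calc κ k Set.univ ≤ μs k Set.univ := Measure.le_iff'.mp (hκμ k) _
      _ = (1 - lam) ^ k := hsP.nu_univ k
      _ ≤ 1 := pow_le_one' (tsub_le_self.trans le_rfl) k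
      _ < ⊤ := by norm_num
  -- κ ≤ νs
  have hκν : ∀ k, κ k ≤ νs k := by
    intro k
    induction k with
    | zero => exact le_rfl
    | succ k ih =>
      refine Measure.le_iff.mpr fun B hB => ?_
      rw [hκ, hνs, iter_succ, iter_succ, Measure.bind_apply hB hrestr_m.aemeasurable,
        Measure.bind_apply hB hsK.q_mble.aemeasurable]
      calc ∫⁻ x, (R x).restrict An B ∂(κ k)
          = ∫⁻ x, R x (B ∩ An) ∂(κ k) :=
            lintegral_congr fun x => Measure.restrict_apply hB
        _ ≤ ∫⁻ x, R x (B ∩ An) ∂(νs k) := lintegral_mono' ih (le_refl _)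
        _ ≤ ∫⁻ x, q K lam φ An x B ∂(νs k) := by
            refine lintegral_mono_ae (((hsK.ae_mem (hsK.iter_compl hsK.hφA k))).mono
              fun x hx => ?_)
            calc R x (B ∩ An) = P x (B ∩ An) - lam * φ (B ∩ An) :=
                  hsP.q_apply (Set.mem_univ x) (hB.inter hAn)
              _ ≤ K x (B ∩ An) - lam * φ (B ∩ An) :=
                  tsub_le_tsub_right
                    (hge x hx (B ∩ An) Set.inter_subset_right (hB.inter hAn)) _
              _ = q K lam φ An x (B ∩ An) := (hsK.q_apply hx (hB.inter hAn)).symm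
              _ ≤ q K lam φ An x B := measure_mono Set.inter_subset_left
  -- escape masses
  set b : ℕ → ℝ≥0∞ := fun j => ∫⁻ x, R x Anᶜ ∂(μs j) with hb
  -- mass comparison
  have hRAn_m : Measurable fun x => R x An := (Measure.measurable_coe hAn).comp hRm
  have hmass : ∀ k, μs k Set.univ ≤ κ k Set.univ + cseq lam b k := by
    intro k
    induction k with
    | zero => simp only [cseq, add_zero]; exact le_rfl
    | succ k ih =>
      haveI := hκfin k
      have hsplit : μs (k + 1) Set.univ = ∫⁻ x, R x An ∂(μs k) + b k := by
        rw [hμs, iter_succ, Measure.bind_apply MeasurableSet.univ hRm.aemeasurable]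
        have : (fun x => R x Set.univ) = fun x => R x An + R x Anᶜ :=
          funext fun x => (measure_add_measure_compl hAn).symm
        rw [this, lintegral_add_left hRAn_m]
      have t2 : ∫⁻ x, R x An ∂(κ k) = κ (k + 1) Set.univ := by
        rw [hκ, iter_succ, Measure.bind_apply MeasurableSet.univ hrestr_m.aemeasurable]
        refine lintegral_congr fun x => ?_
        rw [Measure.restrict_apply MeasurableSet.univ, Set.univ_inter]
      have t1 : ∫⁻ x, R x An ∂(μs k - κ k) ≤ (1 - lam) * cseq lam b k := by
        calc ∫⁻ x, R x An ∂(μs k - κ k) ≤ ∫⁻ _, (1 - lam) ∂(μs k - κ k) := by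
              refine lintegral_mono fun x => ?_
              rw [← hsP.q_univ (Set.mem_univ x)]
              exact measure_mono (Set.subset_univ An)
          _ = (1 - lam) * (μs k - κ k) Set.univ := lintegral_const _
          _ ≤ (1 - lam) * cseq lam b k := by
              refine mul_le_mul_right ?_ _
              rw [Measure.sub_apply MeasurableSet.univ (hκμ k)]
              exact tsub_le_iff_left.mpr ih
      have hdecomp : ∫⁻ x, R x An ∂(μs k)
          = ∫⁻ x, R x An ∂(μs k - κ k) + ∫⁻ x, R x An ∂(κ k) := by
        conv_lhs => rw [← Measure.sub_add_cancel_of_le (hκμ k)]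
        rw [lintegral_add_measure]
      calc μs (k + 1) Set.univ = ∫⁻ x, R x An ∂(μs k) + b k := hsplit
        _ = (∫⁻ x, R x An ∂(μs k - κ k) + ∫⁻ x, R x An ∂(κ k)) + b k := by
            rw [hdecomp]
        _ ≤ ((1 - lam) * cseq lam b k + κ (k + 1) Set.univ) + b k := by
            rw [t2]; exact add_le_add_left (add_le_add_left t1 _) _
        _ = κ (k + 1) Set.univ + cseq lam b (k + 1) := by
            rw [show cseq lam b (k + 1) = (1 - lam) * cseq lam b k + b k from rfl]
            ring
  -- cseq is finite
  have hb_le_one : ∀ k, b k ≤ 1 := by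
    intro k
    calc b k ≤ ∫⁻ x, R x Set.univ ∂(μs k) :=
          lintegral_mono fun x => measure_mono (Set.subset_univ _)
      _ = ∫⁻ _, (1 - lam) ∂(μs k) :=
          lintegral_congr fun x => hsP.q_univ (Set.mem_univ x)
      _ = (1 - lam) * μs k Set.univ := lintegral_const _
      _ ≤ 1 * 1 := mul_le_mul' tsub_le_self (by rw [hsP.nu_univ k]; exact pow_le_one' tsub_le_self k)
      _ = 1 := one_mul 1
  have hc_ne_top : ∀ k, cseq lam b k ≠ ⊤ := by
    intro k
    induction k with
    | zero => simp [cseq]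
    | succ k ih =>
      rw [show cseq lam b (k + 1) = (1 - lam) * cseq lam b k + b k from rfl]
      exact ENNReal.add_ne_top.mpr
        ⟨ENNReal.mul_ne_top (ne_top_of_le_ne_top ENNReal.one_ne_top tsub_le_self) ih,
          ne_top_of_le_ne_top ENNReal.one_ne_top (hb_le_one k)⟩
  -- partial sums of cseq
  have hpartial : ∀ m, lam * (∑ k ∈ Finset.range m, cseq lam b k) ≤ ∑' j, b j := by
    intro m
    cases m with
    | zero => simp
    | succ m =>
      set Sm := ∑ k ∈ Finset.range (m + 1), cseq lam b k with hSm
      have hS_ne : Sm ≠ ⊤ :=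
        (ENNReal.sum_lt_top.mpr fun k _ => (hc_ne_top k).lt_top).ne
      have key : Sm ≤ (1 - lam) * Sm + ∑' j, b j := by
        calc Sm = (∑ k ∈ Finset.range m, cseq lam b (k + 1)) + cseq lam b 0 :=
              Finset.sum_range_succ' _ m
          _ = ∑ k ∈ Finset.range m, ((1 - lam) * cseq lam b k + b k) := by
              rw [show cseq lam b 0 = 0 from rfl, add_zero]
              exact Finset.sum_congr rfl fun k _ => rfl
          _ = (1 - lam) * (∑ k ∈ Finset.range m, cseq lam b k)
              + ∑ k ∈ Finset.range m, b k := by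
              rw [Finset.sum_add_distrib, Finset.mul_sum]
          _ ≤ (1 - lam) * Sm + ∑' j, b j := by
              refine add_le_add (mul_le_mul_right ?_ _) (ENNReal.sum_le_tsum _)
              exact Finset.sum_le_sum_of_subset
                (Finset.range_subset_range.mpr (Nat.le_succ m))
      have hsum1 : lam * Sm + (1 - lam) * Sm = Sm := by
        rw [← add_mul, add_tsub_cancel_of_le hsP.lam_le_one, one_mul]
      have key2 : Sm + lam * Sm ≤ Sm + ∑' j, b j := by
        calc Sm + lam * Sm ≤ ((1 - lam) * Sm + ∑' j, b j) + lam * Sm :=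
              add_le_add_left key _
          _ = (lam * Sm + (1 - lam) * Sm) + ∑' j, b j := by ring
          _ = Sm + ∑' j, b j := by rw [hsum1]
      exact (ENNReal.add_le_add_iff_left hS_ne).mp key2
  have hCsum : lam * ∑' k, cseq lam b k ≤ ∑' j, b j := by
    rw [← ENNReal.tsum_mul_left]
    refine Summable.tsum_le_of_sum_range_le ENNReal.summable fun m => ?_
    rw [← Finset.mul_sum]
    exact hpartial m
  have hBsum : lam * ∑' j, b j ≤ statM P lam φ Set.univ Anᶜ := by
    have hb_le : ∀ j, b j ≤ ∫⁻ x, P x Anᶜ ∂(μs j) := fun j => by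
      refine lintegral_mono fun x => ?_
      rw [hsP.q_apply (Set.mem_univ x) hAn.compl]
      exact tsub_le_self
    calc lam * ∑' j, b j ≤ lam * ∑' j, ∫⁻ x, P x Anᶜ ∂(μs j) :=
          mul_le_mul_right (ENNReal.tsum_le_tsum hb_le) _
      _ = ∫⁻ x, P x Anᶜ ∂(statM P lam φ Set.univ) := by
          rw [statM, lintegral_smul_measure, lintegral_sum_measure, smul_eq_mul]
      _ = ((statM P lam φ Set.univ).bind (fun x => P x)) Anᶜ :=
          (Measure.bind_apply hAn.compl P.measurable.aemeasurable).symm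
      _ = statM P lam φ Set.univ Anᶜ := by rw [hsP.statM_stationary]
  -- conclusion
  have hterm : ∀ k, μs k B ≤ νs k B + cseq lam b k := by
    intro k
    haveI := hκfin k
    have h1 : μs k B = (μs k - κ k) B + κ k B := by
      conv_lhs => rw [← Measure.sub_add_cancel_of_le (hκμ k)]
      simp [Measure.add_apply]
    have h2 : (μs k - κ k) B ≤ cseq lam b k := by
      calc (μs k - κ k) B ≤ (μs k - κ k) Set.univ :=
            measure_mono (Set.subset_univ B)
        _ = μs k Set.univ - κ k Set.univ :=
            Measure.sub_apply MeasurableSet.univ (hκμ k)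
        _ ≤ cseq lam b k := tsub_le_iff_left.mpr (hmass k)
    calc μs k B = (μs k - κ k) B + κ k B := h1
      _ ≤ cseq lam b k + νs k B := add_le_add h2 (Measure.le_iff'.mp (hκν k) B)
      _ = νs k B + cseq lam b k := add_comm _ _
  calc statM P lam φ Set.univ B = lam * ∑' k, μs k B := hsP.statM_apply hB
    _ ≤ lam * ∑' k, (νs k B + cseq lam b k) :=
        mul_le_mul_right (ENNReal.tsum_le_tsum hterm) _
    _ = lam * ∑' k, νs k B + lam * ∑' k, cseq lam b k := by
        rw [ENNReal.tsum_add, mul_add]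
    _ ≤ statM K lam φ An B + lam⁻¹ * statM P lam φ Set.univ Anᶜ := by
        refine add_le_add (le_of_eq (hsK.statM_apply hB).symm) ?_
        have h3 : lam * (lam * ∑' k, cseq lam b k) ≤ statM P lam φ Set.univ Anᶜ :=
          le_trans (mul_le_mul_right hCsum _) hBsum
        calc lam * ∑' k, cseq lam b k
            = lam⁻¹ * (lam * (lam * ∑' k, cseq lam b k)) := by
              rw [← mul_assoc, ENNReal.inv_mul_cancel hsP.hlam0.ne' hsP.lam_ne_top,
                one_mul]
          _ ≤ lam⁻¹ * statM P lam φ Set.univ Anᶜ := mul_le_mul_right h3 _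


end SURAux


/-- Let `X` be strongly uniformly recurrent under `P`
(`P(x,·) ≥ λ φ` for all `x`) with unique stationary distribution `π`, and let `Pn` be
arbitrary general augmentations over any increasing truncation sequence `A n ↑ S`, with
`φ` supported on the first truncation set. Then each `Pn` is strongly uniformly
recurrent on `A n` and has a unique stationary distribution, and any such stationary
distributions satisfy `sup_B |πn(B) - π(B)| → 0`. -/
theorem strongly_uniformly_recurrent_general_augmentation
    {S : Type*} [MeasurableSpace S]
    (P : Kernel S S) [IsMarkovKernel P]
    (φ : Measure S) [IsProbabilityMeasure φ]
    (lam : ℝ≥0∞) (hlam : 0 < lam)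
    (hminor : ∀ x, ∀ B : Set S, MeasurableSet B → lam * φ B ≤ P x B)
    (π : Measure S) [IsProbabilityMeasure π]
    (hπ_stat : π.bind (fun x => P x) = π)
    (hπ_unique : ∀ μ : Measure S, IsProbabilityMeasure μ →
      μ.bind (fun x => P x) = μ → μ = π)
    (A : ℕ → Set S) (hA_meas : ∀ n, MeasurableSet (A n))
    (hA_mono : Monotone A) (hA_cover : ⋃ n, A n = Set.univ)
    (hφ_supp : φ (A 0)ᶜ = 0)
    (Pn : ℕ → Kernel S S) (hPn_markov : ∀ n, IsMarkovKernel (Pn n))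
    (hPn_into : ∀ n, ∀ x ∈ A n, Pn n x (A n) = 1)
    (hPn_ge : ∀ n, ∀ x ∈ A n, ∀ B ⊆ A n, MeasurableSet B → P x B ≤ Pn n x B) :
    (∀ n, ∀ x ∈ A n, ∀ B : Set S, MeasurableSet B → lam * φ B ≤ Pn n x B) ∧
    (∀ n, ∃! πn : Measure S, IsProbabilityMeasure πn ∧ πn (A n)ᶜ = 0 ∧
      πn.bind (fun x => Pn n x) = πn) ∧
    (∀ πn : ℕ → Measure S,
      (∀ n, IsProbabilityMeasure (πn n)) →
      (∀ n, πn n (A n)ᶜ = 0) →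
      (∀ n, (πn n).bind (fun x => Pn n x) = πn n) →
      Tendsto (fun n => ⨆ (B : Set S) (_ : MeasurableSet B),
        |(πn n B).toReal - (π B).toReal|) atTop (𝓝 0)) := by
  classical
  have hAn0 : ∀ n, A 0 ⊆ A n := fun n => hA_mono (Nat.zero_le n)
  have hφAn : ∀ n, φ (A n)ᶜ = 0 := fun n =>
    measure_mono_null (Set.compl_subset_compl.mpr (hAn0 n)) hφ_supp
  -- Part 1: minorization for the augmented kernels
  have part1 : ∀ n, ∀ x ∈ A n, ∀ B : Set S, MeasurableSet B →
      lam * φ B ≤ Pn n x B := by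
    intro n x hx B hB
    have hφB : φ B = φ (B ∩ A n) := by
      have h0 : φ (B \ A n) = 0 :=
        measure_mono_null (fun y hy => fun h => hy.2 (hAn0 n h)) hφ_supp
      refine le_antisymm ?_ (measure_mono Set.inter_subset_left)
      calc φ B = φ ((B ∩ A n) ∪ (B \ A n)) := by rw [Set.inter_union_diff]
        _ ≤ φ (B ∩ A n) + φ (B \ A n) := measure_union_le _ _
        _ = φ (B ∩ A n) := by rw [h0, add_zero]
    calc lam * φ B = lam * φ (B ∩ A n) := by rw [hφB]
      _ ≤ P x (B ∩ A n) := hminor x _ (hB.inter (hA_meas n))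
      _ ≤ Pn n x (B ∩ A n) :=
          hPn_ge n x hx _ Set.inter_subset_right (hB.inter (hA_meas n))
      _ ≤ Pn n x B := measure_mono Set.inter_subset_left
  -- the settings
  have hsn : ∀ n, SURAux.Setting (Pn n) lam φ (A n) := fun n =>
    { hA := hA_meas n, hφA := hφAn n, hm := part1 n, hinto := hPn_into n
      hlam0 := hlam }
  have hsP : SURAux.Setting P lam φ Set.univ :=
    { hA := MeasurableSet.univ
      hφA := by simp
      hm := fun x _ B hB => hminor x B hB
      hinto := fun x _ => measure_univ
      hlam0 := hlam }
  refine ⟨part1, ?_, ?_⟩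
  · -- Part 2: existence and uniqueness of the stationary distributions
    intro n
    haveI := hPn_markov n
    exact (hsn n).exu
  · -- Part 3: convergence in total variation
    intro πn hprob hsupp hstat
    have hπ_eq : SURAux.statM P lam φ Set.univ = π :=
      hπ_unique _ hsP.statM_prob hsP.statM_stationary
    have hπn_eq : ∀ n, πn n = SURAux.statM (Pn n) lam φ (A n) := by
      intro n
      haveI := hPn_markov n
      exact (hsn n).statM_unique (πn n) (hprob n) (hsupp n) (hstat n)
    have hE_ne_top : ∀ n, (lam⁻¹ * π (A n)ᶜ) ≠ ⊤ := fun n =>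
      ENNReal.mul_ne_top (ENNReal.inv_ne_top.mpr hlam.ne') (measure_ne_top _ _)
    have hkey : ∀ n, ∀ B : Set S, MeasurableSet B →
        π B ≤ πn n B + lam⁻¹ * π (A n)ᶜ := by
      intro n B hB
      haveI := hPn_markov n
      have h := SURAux.compare hsP (hsn n) (hPn_ge n) hB
      rw [hπ_eq] at h
      rw [hπn_eq n]
      exact h
    have hkey2 : ∀ n, ∀ B : Set S, MeasurableSet B →
        πn n B ≤ π B + lam⁻¹ * π (A n)ᶜ := by
      intro n B hB
      haveI := hprob n
      have h := hkey n Bᶜ hB.compl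
      have h1 : πn n B + π Bᶜ ≤ (π B + lam⁻¹ * π (A n)ᶜ) + π Bᶜ := by
        calc πn n B + π Bᶜ ≤ πn n B + (πn n Bᶜ + lam⁻¹ * π (A n)ᶜ) :=
              add_le_add_right h _
          _ = (πn n B + πn n Bᶜ) + lam⁻¹ * π (A n)ᶜ := by ring
          _ = 1 + lam⁻¹ * π (A n)ᶜ := by rw [measure_add_measure_compl hB, measure_univ]
          _ = (π B + π Bᶜ) + lam⁻¹ * π (A n)ᶜ := by
              rw [measure_add_measure_compl hB, measure_univ]
          _ = (π B + lam⁻¹ * π (A n)ᶜ) + π Bᶜ := by ring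
      exact (ENNReal.add_le_add_iff_right (measure_ne_top π Bᶜ)).mp h1
    have habs : ∀ n, ∀ B : Set S, MeasurableSet B →
        |(πn n B).toReal - (π B).toReal| ≤ (lam⁻¹ * π (A n)ᶜ).toReal := by
      intro n B hB
      rw [abs_sub_le_iff]
      constructor
      · have h := hkey2 n B hB
        have h2 := ENNReal.toReal_mono
          (ENNReal.add_ne_top.mpr ⟨measure_ne_top _ _, hE_ne_top n⟩) h
        rw [ENNReal.toReal_add (measure_ne_top _ _) (hE_ne_top n)] at h2
        linarith
      · have h := hkey n B hB
        have h2 := ENNReal.toReal_mono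
          (ENNReal.add_ne_top.mpr ⟨measure_ne_top _ _, hE_ne_top n⟩) h
        rw [ENNReal.toReal_add (measure_ne_top _ _) (hE_ne_top n)] at h2
        linarith
    have hsup_le : ∀ n, (⨆ (B : Set S) (_ : MeasurableSet B),
        |(πn n B).toReal - (π B).toReal|) ≤ (lam⁻¹ * π (A n)ᶜ).toReal := by
      intro n
      exact Real.iSup_le
        (fun B => Real.iSup_le (fun hB => habs n B hB) ENNReal.toReal_nonneg)
        ENNReal.toReal_nonneg
    have hsup_nonneg : ∀ n, 0 ≤ ⨆ (B : Set S) (_ : MeasurableSet B),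
        |(πn n B).toReal - (π B).toReal| := fun n =>
      Real.iSup_nonneg fun B => Real.iSup_nonneg fun _ => abs_nonneg _
    have hπA : Tendsto (fun n => π (A n)ᶜ) atTop (𝓝 0) := by
      have h1 : Tendsto (fun n => π (A n)ᶜ) atTop (𝓝 (π (⋂ n, (A n)ᶜ))) :=
        tendsto_measure_iInter_atTop (fun n => (hA_meas n).compl.nullMeasurableSet)
          (fun i j hij => Set.compl_subset_compl.mpr (hA_mono hij))
          ⟨0, measure_ne_top _ _⟩
      have h2 : (⋂ n, (A n)ᶜ) = ∅ := by
        rw [← Set.compl_iUnion, hA_cover, Set.compl_univ]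
      rwa [h2, measure_empty] at h1
    have hE0 : Tendsto (fun n => (lam⁻¹ * π (A n)ᶜ).toReal) atTop (𝓝 0) := by
      have h1 : Tendsto (fun n => lam⁻¹ * π (A n)ᶜ) atTop (𝓝 (lam⁻¹ * 0)) :=
        ENNReal.Tendsto.const_mul hπA (Or.inr (ENNReal.inv_ne_top.mpr hlam.ne'))
      rw [mul_zero] at h1
      have h2 := (ENNReal.tendsto_toReal (by simp : (0 : ℝ≥0∞) ≠ ⊤)).comp h1
      simpa only [Function.comp_def, ENNReal.toReal_zero] using h2
    exact tendsto_of_tendsto_of_tendsto_of_le_of_le tendsto_const_nhds hE0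
      hsup_nonneg hsup_le
end

section
/- In the regenerative split-chain construction, if τ is the first regeneration time (geometric with success probability λ at each step), then under both P_φ and the augmented measure P_φ^n one has E[τ²] ≤ 2/λ², and |E_φ^n ∑_{j=0}^{τ−1} I(X_j ∈ B) − E_φ ∑_{j=0}^{τ−1} I(X_j ∈ B)| ≤ 2 (2/λ²)^{1/2} P_φ(τ > β_n)^{1/2} uniformly in B, where β_n is the first time the chain uses the augmentation residual kernel. -/
open MeasureTheory Filter Classical
open scoped BigOperators ENNReal


private lemma choose_two_id (n : ℕ) : (n+2).choose 2 * 2 = (n+1) * (n+2) := by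
  induction n with
  | zero => rfl
  | succ m ih =>
    rw [show m+1+2 = (m+2)+1 from rfl, Nat.choose_succ_succ, Nat.choose_one_right,
      add_mul, ih]
    ring

private lemma geom_sq_summable {lam : ℝ} (h0 : 0 < lam) (h1 : lam ≤ 1) :
    Summable (fun k : ℕ => ((k:ℝ)+1)^2 * (lam * (1-lam)^k)) ∧
    ∑' k : ℕ, ((k:ℝ)+1)^2 * (lam * (1-lam)^k) ≤ 2 / lam^2 := by
  set r : ℝ := 1 - lam with hr_def
  have hr0 : 0 ≤ r := by simp [hr_def]; linarith
  have hr : ‖r‖ < 1 := by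
    rw [Real.norm_eq_abs, abs_of_nonneg hr0]; simp [hr_def]; linarith
  have H := hasSum_choose_mul_geometric_of_norm_lt_one (𝕜 := ℝ) 2 hr
  have hcast : ∀ n : ℕ, (((n+2).choose 2 : ℕ) : ℝ) = (((n:ℝ)+1) * ((n:ℝ)+2)) / 2 := by
    intro n
    have h := choose_two_id n
    have h2 : (((n+2).choose 2 * 2 : ℕ) : ℝ) = (((n+1)*(n+2) : ℕ) : ℝ) := by exact_mod_cast h
    push_cast at h2; linarith
  have H2 : HasSum (fun n : ℕ => (((n:ℝ)+1) * ((n:ℝ)+2)) * r^n) (2 / (1-r)^3) := by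
    have h := H.mul_left 2
    have e : (2:ℝ) * (1/(1-r)^(2+1)) = 2/(1-r)^3 := by ring
    rw [e] at h
    have efun : (fun n : ℕ => (2:ℝ) * ((((n+2).choose 2 : ℕ):ℝ) * r^n))
        = fun n : ℕ => (((n:ℝ)+1) * ((n:ℝ)+2)) * r^n := by
      funext n; rw [hcast n]; ring
    rwa [efun] at h
  have Hb : HasSum (fun n : ℕ => lam * ((((n:ℝ)+1) * ((n:ℝ)+2)) * r^n)) (2 / lam^2) := by
    have := H2.mul_left lam
    convert this using 1
    · rfl
    have h1r : (1 : ℝ) - r = lam := by simp [hr_def]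
    rw [h1r]
    field_simp
  have hle : ∀ k : ℕ, ((k:ℝ)+1)^2 * (lam * r^k) ≤
      lam * ((((k:ℝ)+1) * ((k:ℝ)+2)) * r^k) := by
    intro k
    have hk : (0:ℝ) ≤ (k:ℝ) := Nat.cast_nonneg k
    have hrk : (0:ℝ) ≤ r^k := pow_nonneg hr0 k
    nlinarith [mul_nonneg (mul_nonneg h0.le hrk) hk]
  have hnn : ∀ k : ℕ, 0 ≤ ((k:ℝ)+1)^2 * (lam * r^k) := by
    intro k
    have hk : (0:ℝ) ≤ (k:ℝ)+1 := by positivity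
    positivity
  have hs : Summable (fun k : ℕ => ((k:ℝ)+1)^2 * (lam * r^k)) :=
    Summable.of_nonneg_of_le hnn hle Hb.summable
  exact ⟨hs, le_trans (Summable.tsum_le_tsum hle hs Hb.summable) Hb.tsum_eq.le⟩

private lemma moment_lintegral {Ω : Type*} [MeasurableSpace Ω] (m : Measure Ω)
    [IsProbabilityMeasure m] (τ : Ω → ℕ) (hτ : Measurable τ)
    {lam : ℝ} (h0 : 0 < lam) (h1 : lam ≤ 1)
    (hg : ∀ k : ℕ, m {ω | τ ω = k + 1} = ENNReal.ofReal (lam * (1-lam)^k)) :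
    ∫⁻ ω, ((τ ω : ℝ≥0∞))^2 ∂m ≤ ENNReal.ofReal (2 / lam^2) := by
  set f : ℕ → ℝ≥0∞ := fun n => ((n : ℝ≥0∞))^2 * (Measure.map τ m) {n} with hf_def
  have hmap : ∫⁻ ω, ((τ ω : ℝ≥0∞))^2 ∂m = ∫⁻ n, ((n : ℝ≥0∞))^2 ∂(Measure.map τ m) := by
    rw [lintegral_map (by measurability) hτ]
  have hcnt : ∫⁻ n, ((n : ℝ≥0∞))^2 ∂(Measure.map τ m) = ∑' n : ℕ, f n :=
    lintegral_countable' _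
  have happ : ∀ n : ℕ, (Measure.map τ m) {n} = m {ω | τ ω = n} := by
    intro n
    rw [Measure.map_apply hτ (measurableSet_singleton n)]
    rfl
  have hzero : ∑' n : ℕ, f n = ∑' k : ℕ, f (k+1) := by
    rw [tsum_eq_zero_add' ENNReal.summable]
    have : f 0 = 0 := by simp [hf_def]
    rw [this, zero_add]
  have hterm : ∀ k : ℕ, f (k+1)
      = ENNReal.ofReal (((k:ℝ)+1)^2 * (lam * (1-lam)^k)) := by
    intro k
    rw [hf_def]
    simp only
    rw [happ, hg k, ENNReal.ofReal_mul (p := ((k:ℝ)+1)^2) (by positivity)]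
    congr 1
    rw [show ((k:ℝ)+1) = ((k+1:ℕ):ℝ) from by push_cast; ring,
      ENNReal.ofReal_pow (by positivity), ENNReal.ofReal_natCast]
  obtain ⟨hsum, hle⟩ := geom_sq_summable h0 h1
  calc ∫⁻ ω, ((τ ω : ℝ≥0∞))^2 ∂m
      = ∑' k : ℕ, ENNReal.ofReal (((k:ℝ)+1)^2 * (lam * (1-lam)^k)) := by
        rw [hmap, hcnt, hzero]; exact tsum_congr hterm
    _ = ENNReal.ofReal (∑' k : ℕ, ((k:ℝ)+1)^2 * (lam * (1-lam)^k)) :=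
        (ENNReal.ofReal_tsum_of_nonneg (fun k => mul_nonneg (by positivity) (mul_nonneg h0.le (pow_nonneg (by linarith) k))) hsum).symm
    _ ≤ ENNReal.ofReal (2 / lam^2) := ENNReal.ofReal_le_ofReal hle

private lemma moment_integral {Ω : Type*} [MeasurableSpace Ω] (m : Measure Ω)
    [IsProbabilityMeasure m] (τ : Ω → ℕ) (hτ : Measurable τ)
    {lam : ℝ} (h0 : 0 < lam) (h1 : lam ≤ 1)
    (hg : ∀ k : ℕ, m {ω | τ ω = k + 1} = ENNReal.ofReal (lam * (1-lam)^k)) :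
    ∫ ω, ((τ ω : ℝ))^2 ∂m ≤ 2 / lam^2 := by
  have hFm : Measurable (fun ω => ((τ ω : ℝ≥0∞))^2) :=
    (measurable_of_countable (fun n : ℕ => ((n : ℝ≥0∞))^2)).comp hτ
  have hfin : ∀ᵐ ω ∂m, ((τ ω : ℝ≥0∞))^2 < ∞ :=
    ae_of_all _ fun ω => ENNReal.pow_lt_top (ENNReal.natCast_lt_top _)
  have h1' := integral_toReal hFm.aemeasurable hfin
  calc ∫ ω, ((τ ω : ℝ))^2 ∂m
      = ∫ ω, (((τ ω : ℝ≥0∞))^2).toReal ∂m := by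
        refine integral_congr_ae (ae_of_all _ fun ω => ?_)
        simp [ENNReal.toReal_pow]
    _ = (∫⁻ ω, ((τ ω : ℝ≥0∞))^2 ∂m).toReal := h1'
    _ ≤ (ENNReal.ofReal (2 / lam^2)).toReal :=
        ENNReal.toReal_mono ENNReal.ofReal_ne_top
          (moment_lintegral m τ hτ h0 h1 hg)
    _ = 2 / lam^2 := ENNReal.toReal_ofReal (by positivity)

/-- In the regenerative split-chain construction, if `τ` is the first
regeneration time (geometric with success probability `λ` at each step) under both `P_φ`
(measure `μ`) and the augmented dynamics `P_φⁿ` (measure `ν`), the two dynamics agreeing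
up to `min(τ, βₙ)` where `βₙ` is the first time the augmentation residual kernel is
used, then `E[τ²] ≤ 2/λ²` under both measures, and uniformly in `B`,
`|E_φⁿ ∑_{j<τ} 1(X_j ∈ B) - E_φ ∑_{j<τ} 1(X_j ∈ B)| ≤ 2 (2/λ²)^{1/2} P_φ(τ > βₙ)^{1/2}`. -/
theorem split_chain_cycle_bound
    {Ω : Type*} [MeasurableSpace Ω] {S : Type*} [MeasurableSpace S]
    (μ ν : Measure Ω) [IsProbabilityMeasure μ] [IsProbabilityMeasure ν]
    (X : ℕ → Ω → S) (hX : ∀ j, Measurable (X j))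
    (τ βn : Ω → ℕ) (hτ : Measurable τ) (hβ : Measurable βn)
    (lam : ℝ) (hlam0 : 0 < lam) (hlam1 : lam ≤ 1)
    (hgeomμ : ∀ k : ℕ, μ {ω | τ ω = k + 1} = ENNReal.ofReal (lam * (1 - lam) ^ k))
    (hgeomν : ∀ k : ℕ, ν {ω | τ ω = k + 1} = ENNReal.ofReal (lam * (1 - lam) ^ k))
    (hτpos : ∀ ω, 1 ≤ τ ω)
    (hagree : ∀ (j : ℕ) (B : Set S), MeasurableSet B →
      μ {ω | X j ω ∈ B ∧ j < τ ω ∧ j < βn ω} = ν {ω | X j ω ∈ B ∧ j < τ ω ∧ j < βn ω})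
    (hcross : ν {ω | βn ω < τ ω} = μ {ω | βn ω < τ ω}) :
    (∫ ω, ((τ ω : ℝ)) ^ 2 ∂μ ≤ 2 / lam ^ 2) ∧
    (∫ ω, ((τ ω : ℝ)) ^ 2 ∂ν ≤ 2 / lam ^ 2) ∧
    (∀ B : Set S, MeasurableSet B →
      |(∫ ω, (∑ j ∈ Finset.range (τ ω), if X j ω ∈ B then (1 : ℝ) else 0) ∂ν)
        - (∫ ω, (∑ j ∈ Finset.range (τ ω), if X j ω ∈ B then (1 : ℝ) else 0) ∂μ)|
      ≤ 2 * Real.sqrt (2 / lam ^ 2) *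
          Real.sqrt ((μ {ω | βn ω < τ ω}).toReal)) := by
  refine ⟨moment_integral μ τ hτ hlam0 hlam1 hgeomμ,
    moment_integral ν τ hτ hlam0 hlam1 hgeomν, ?_⟩
  intro B hB
  set E : Set Ω := {ω | βn ω < τ ω} with hE_def
  have hEm : MeasurableSet E := measurableSet_lt hβ hτ
  set s : ℕ → Set Ω := fun j => {ω | X j ω ∈ B ∧ j < τ ω ∧ j < βn ω} with hs_def
  set t : ℕ → Set Ω := fun j => {ω | X j ω ∈ B ∧ j < τ ω ∧ βn ω ≤ j} with ht_def
  have hsm : ∀ j, MeasurableSet (s j) := fun j =>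
    (hX j hB).inter ((hτ measurableSet_Ioi).inter (hβ measurableSet_Ioi))
  have htm : ∀ j, MeasurableSet (t j) := fun j =>
    (hX j hB).inter ((hτ measurableSet_Ioi).inter (hβ measurableSet_Iic))
  set G1 : Ω → ℝ≥0∞ := fun ω => ∑' j : ℕ, (s j).indicator (fun _ => 1) ω with hG1_def
  set G2 : Ω → ℝ≥0∞ := fun ω => ∑' j : ℕ, (t j).indicator (fun _ => 1) ω with hG2_def
  have hG1m : Measurable G1 :=
    Measurable.ennreal_tsum fun j => measurable_const.indicator (hsm j)
  have hG2m : Measurable G2 :=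
    Measurable.ennreal_tsum fun j => measurable_const.indicator (htm j)
  -- G = G1 + G2 equals the ofReal of the partial sum
  have hGg : ∀ ω, G1 ω + G2 ω
      = ENNReal.ofReal (∑ j ∈ Finset.range (τ ω), if X j ω ∈ B then (1 : ℝ) else 0) := by
    intro ω
    have hsplit : ∀ j : ℕ, (s j).indicator (fun _ => (1:ℝ≥0∞)) ω
        + (t j).indicator (fun _ => (1:ℝ≥0∞)) ω
        = if X j ω ∈ B ∧ j < τ ω then 1 else 0 := by
      intro j
      simp only [Set.indicator, hs_def, ht_def, Set.mem_setOf_eq]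
      rcases lt_or_ge j (βn ω) with h | h
      · by_cases hA : X j ω ∈ B <;> by_cases hτj : j < τ ω <;>
          simp [hA, hτj, h, not_le.mpr h]
      · by_cases hA : X j ω ∈ B <;> by_cases hτj : j < τ ω <;>
          simp [hA, hτj, h, not_lt.mpr h]
    have htsum : G1 ω + G2 ω = ∑' j : ℕ, (if X j ω ∈ B ∧ j < τ ω then (1:ℝ≥0∞) else 0) := by
      rw [hG1_def, hG2_def]
      simp only
      rw [← ENNReal.tsum_add]
      exact tsum_congr hsplit
    rw [htsum, tsum_eq_sum (s := Finset.range (τ ω))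
      (by intro j hj; rw [if_neg]; rintro ⟨-, hj'⟩; simp at hj; omega)]
    rw [ENNReal.ofReal_sum_of_nonneg (by intro j _; split_ifs <;> norm_num)]
    refine Finset.sum_congr rfl fun j hj => ?_
    simp only [Finset.mem_range] at hj
    by_cases hA : X j ω ∈ B <;> simp [hA, hj]
  have hGm : Measurable (fun ω => G1 ω + G2 ω) := hG1m.add hG2m
  -- bound G by τ²
  have hGle : ∀ ω, G1 ω + G2 ω ≤ ((τ ω : ℝ≥0∞))^2 := by
    intro ω
    rw [hGg ω]
    have h1 : (∑ j ∈ Finset.range (τ ω), if X j ω ∈ B then (1:ℝ) else 0) ≤ (τ ω : ℝ) := by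
      calc (∑ j ∈ Finset.range (τ ω), if X j ω ∈ B then (1:ℝ) else 0)
          ≤ ∑ j ∈ Finset.range (τ ω), (1:ℝ) :=
            Finset.sum_le_sum fun j _ => by split_ifs <;> norm_num
        _ = (τ ω : ℝ) := by simp
    calc ENNReal.ofReal (∑ j ∈ Finset.range (τ ω), if X j ω ∈ B then (1:ℝ) else 0)
        ≤ ENNReal.ofReal ((τ ω : ℝ)) := ENNReal.ofReal_le_ofReal h1
      _ = ((τ ω : ℕ) : ℝ≥0∞) := ENNReal.ofReal_natCast _
      _ ≤ ((τ ω : ℝ≥0∞))^2 := by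
          have h2 : (τ ω) ≤ (τ ω)^2 := Nat.le_self_pow two_ne_zero _
          exact_mod_cast h2
  have hLμ : ∫⁻ ω, (G1 ω + G2 ω) ∂μ ≤ ENNReal.ofReal (2 / lam^2) :=
    le_trans (lintegral_mono hGle) (moment_lintegral μ τ hτ hlam0 hlam1 hgeomμ)
  have hLν : ∫⁻ ω, (G1 ω + G2 ω) ∂ν ≤ ENNReal.ofReal (2 / lam^2) :=
    le_trans (lintegral_mono hGle) (moment_lintegral ν τ hτ hlam0 hlam1 hgeomν)
  -- the agreeing part
  have hA : ∫⁻ ω, G1 ω ∂μ = ∫⁻ ω, G1 ω ∂ν := by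
    rw [hG1_def]
    simp only
    rw [lintegral_tsum (fun j => (measurable_const.indicator (hsm j)).aemeasurable),
      lintegral_tsum (fun j => (measurable_const.indicator (hsm j)).aemeasurable)]
    refine tsum_congr fun j => ?_
    rw [lintegral_indicator_const (hsm j), lintegral_indicator_const (hsm j),
      one_mul, one_mul]
    exact hagree j B hB
  -- the crossing part bound
  set K : ℝ≥0∞ := (ENNReal.ofReal (2 / lam^2)) ^ ((1:ℝ)/2) * (μ E) ^ ((1:ℝ)/2) with hK_def
  have hG2le : ∀ ω, G2 ω ≤ ((τ ω : ℝ≥0∞)) * E.indicator (fun _ => 1) ω := by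
    intro ω
    by_cases hω : βn ω < τ ω
    · have hmem : ω ∈ E := hω
      rw [Set.indicator_of_mem hmem, mul_one]
      calc G2 ω ≤ ∑' j : ℕ, (if j < τ ω then (1:ℝ≥0∞) else 0) := by
            rw [hG2_def]; simp only
            refine ENNReal.tsum_le_tsum fun j => ?_
            by_cases h : ω ∈ t j
            · rw [Set.indicator_of_mem h]
              have : j < τ ω := h.2.1
              simp [this]
            · simp [Set.indicator_of_notMem h]
        _ = ∑ j ∈ Finset.range (τ ω), (if j < τ ω then (1:ℝ≥0∞) else 0) :=
            tsum_eq_sum (s := Finset.range (τ ω)) (by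
              intro j hj
              simp only [Finset.mem_range, not_lt] at hj
              rw [if_neg (by omega)])
        _ = ∑ j ∈ Finset.range (τ ω), (1:ℝ≥0∞) :=
            Finset.sum_congr rfl fun j hj => if_pos (Finset.mem_range.mp hj)
        _ = ((τ ω : ℕ) : ℝ≥0∞) := by simp
    · have h0 : G2 ω = 0 := by
        rw [hG2_def]
        simp only
        rw [ENNReal.summable.tsum_eq_zero_iff]
        intro j
        refine Set.indicator_of_notMem ?_ _
        rintro ⟨-, hjτ, hjβ⟩
        exact hω (lt_of_le_of_lt hjβ hjτ)
      rw [h0]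
      exact zero_le
  have hconj : Real.HolderConjugate 2 2 := Real.HolderConjugate.two_two
  have hcrossbound : ∀ (m : Measure Ω), m E = μ E →
      (∫⁻ ω, ((τ ω : ℝ≥0∞))^2 ∂m ≤ ENNReal.ofReal (2 / lam^2)) →
      ∫⁻ ω, G2 ω ∂m ≤ K := by
    intro m hmE hm2
    have hf : AEMeasurable (fun ω => ((τ ω : ℝ≥0∞))) m :=
      ((measurable_of_countable (fun n : ℕ => ((n : ℝ≥0∞)))).comp hτ).aemeasurable
    have hg : AEMeasurable (fun ω => E.indicator (fun _ => (1:ℝ≥0∞)) ω) m :=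
      (measurable_const.indicator hEm).aemeasurable
    have hH := ENNReal.lintegral_mul_le_Lp_mul_Lq m hconj hf hg
    have e1 : ∫⁻ ω, ((τ ω : ℝ≥0∞)) ^ (2:ℝ) ∂m = ∫⁻ ω, ((τ ω : ℝ≥0∞))^2 ∂m := by
      refine lintegral_congr fun ω => ?_
      rw [show (2:ℝ) = ((2:ℕ):ℝ) from by norm_num, ENNReal.rpow_natCast]
    have e2 : ∫⁻ ω, (E.indicator (fun _ => (1:ℝ≥0∞)) ω) ^ (2:ℝ) ∂m = m E := by
      have : ∀ ω, (E.indicator (fun _ => (1:ℝ≥0∞)) ω) ^ (2:ℝ)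
          = E.indicator (fun _ => (1:ℝ≥0∞)) ω := by
        intro ω
        by_cases h : ω ∈ E
        · simp [Set.indicator_of_mem h]
        · simp [Set.indicator_of_notMem h, ENNReal.zero_rpow_of_pos]
      rw [lintegral_congr this, lintegral_indicator_const hEm, one_mul]
    calc ∫⁻ ω, G2 ω ∂m
        ≤ ∫⁻ ω, ((τ ω : ℝ≥0∞)) * E.indicator (fun _ => 1) ω ∂m := lintegral_mono hG2le
      _ ≤ (∫⁻ ω, ((τ ω : ℝ≥0∞)) ^ (2:ℝ) ∂m) ^ ((1:ℝ)/2)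
          * (∫⁻ ω, (E.indicator (fun _ => (1:ℝ≥0∞)) ω) ^ (2:ℝ) ∂m) ^ ((1:ℝ)/2) := hH
      _ = (∫⁻ ω, ((τ ω : ℝ≥0∞))^2 ∂m) ^ ((1:ℝ)/2) * (m E) ^ ((1:ℝ)/2) := by rw [e1, e2]
      _ ≤ K := by
          rw [hK_def, hmE]
          exact mul_le_mul' (ENNReal.rpow_le_rpow hm2 (by norm_num)) le_rfl
  have hCμ : ∫⁻ ω, G2 ω ∂μ ≤ K := hcrossbound μ rfl
    (moment_lintegral μ τ hτ hlam0 hlam1 hgeomμ)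
  have hCν : ∫⁻ ω, G2 ω ∂ν ≤ K := hcrossbound ν hcross
    (moment_lintegral ν τ hτ hlam0 hlam1 hgeomν)
  have hKne : K ≠ ∞ := by
    rw [hK_def]
    exact ENNReal.mul_ne_top
      (ENNReal.rpow_ne_top_of_nonneg (by norm_num) ENNReal.ofReal_ne_top)
      (ENNReal.rpow_ne_top_of_nonneg (by norm_num) (measure_ne_top μ E))
  have hKtoReal : K.toReal = Real.sqrt (2 / lam^2) * Real.sqrt ((μ E).toReal) := by
    rw [hK_def, ENNReal.toReal_mul, ← ENNReal.toReal_rpow, ← ENNReal.toReal_rpow,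
      ENNReal.toReal_ofReal (by positivity), ← Real.sqrt_eq_rpow, ← Real.sqrt_eq_rpow]
  -- integrals as toReal of lintegrals
  have hint : ∀ (m : Measure Ω),
      ∫ ω, (∑ j ∈ Finset.range (τ ω), if X j ω ∈ B then (1 : ℝ) else 0) ∂m
      = (∫⁻ ω, (G1 ω + G2 ω) ∂m).toReal := by
    intro m
    rw [← integral_toReal hGm.aemeasurable
      (ae_of_all _ fun ω => by rw [hGg ω]; exact ENNReal.ofReal_lt_top)]
    refine integral_congr_ae (ae_of_all _ fun ω => ?_)
    show (∑ j ∈ Finset.range (τ ω), if X j ω ∈ B then (1:ℝ) else 0) = (G1 ω + G2 ω).toReal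
    rw [hGg ω, ENNReal.toReal_ofReal
      (Finset.sum_nonneg fun j _ => by split_ifs <;> norm_num)]
  -- put everything together
  have hsplitμ : ∫⁻ ω, (G1 ω + G2 ω) ∂μ = ∫⁻ ω, G1 ω ∂μ + ∫⁻ ω, G2 ω ∂μ :=
    lintegral_add_left hG1m _
  have hsplitν : ∫⁻ ω, (G1 ω + G2 ω) ∂ν = ∫⁻ ω, G1 ω ∂ν + ∫⁻ ω, G2 ω ∂ν :=
    lintegral_add_left hG1m _
  have hAνne : ∫⁻ ω, G1 ω ∂ν ≠ ∞ := by
    refine ne_top_of_le_ne_top ENNReal.ofReal_ne_top (le_trans ?_ hLν)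
    exact le_trans (lintegral_mono fun ω => le_self_add) le_rfl
  have hC2ne : ∫⁻ ω, G2 ω ∂ν ≠ ∞ := ne_top_of_le_ne_top hKne hCν
  have hC1ne : ∫⁻ ω, G2 ω ∂μ ≠ ∞ := ne_top_of_le_ne_top hKne hCμ
  rw [hint μ, hint ν, hsplitμ, hsplitν, hA,
    ENNReal.toReal_add hAνne hC2ne, ENNReal.toReal_add hAνne hC1ne]
  have b1 : (∫⁻ ω, G2 ω ∂ν).toReal ≤ K.toReal := ENNReal.toReal_mono hKne hCν
  have b2 : (∫⁻ ω, G2 ω ∂μ).toReal ≤ K.toReal := ENNReal.toReal_mono hKne hCμ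
  have n1 : 0 ≤ (∫⁻ ω, G2 ω ∂ν).toReal := ENNReal.toReal_nonneg
  have n2 : 0 ≤ (∫⁻ ω, G2 ω ∂μ).toReal := ENNReal.toReal_nonneg
  have hKnn : 0 ≤ K.toReal := ENNReal.toReal_nonneg
  have : |(∫⁻ ω, G1 ω ∂ν).toReal + (∫⁻ ω, G2 ω ∂ν).toReal
      - ((∫⁻ ω, G1 ω ∂ν).toReal + (∫⁻ ω, G2 ω ∂μ).toReal)| ≤ K.toReal := by
    rw [abs_le]
    constructor <;> [linarith; linarith]
  calc |(∫⁻ ω, G1 ω ∂ν).toReal + (∫⁻ ω, G2 ω ∂ν).toReal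
      - ((∫⁻ ω, G1 ω ∂ν).toReal + (∫⁻ ω, G2 ω ∂μ).toReal)| ≤ K.toReal := this
    _ ≤ 2 * Real.sqrt (2 / lam ^ 2) * Real.sqrt ((μ E).toReal) := by
        rw [hKtoReal]
        nlinarith [Real.sqrt_nonneg (2 / lam^2), Real.sqrt_nonneg ((μ E).toReal)]
end
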